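/- Let ξ and ξ* be designs on X with nonsingular information matrices, ξ* D-optimum, and suppose max_{x∈X} d(ξ,x) − m = ε < δ. Then log det M(ξ*) − log det M(ξ) < δ. -/

import Mathlib

open Matrix BigOperators Finset

/-- Information matrix M(ξ) = ∑ w(x) x xᵀ of a finitely supported design. -/
noncomputable def infoM (m : ℕ) (S : Finset (Fin m → ℝ)) (w : (Fin m → ℝ) → ℝ) :
    Matrix (Fin m) (Fin m) ℝ := ∑ x ∈ S, w x • vecMulVec x x

/-- A design: a probability weight function on the finite design space S. -/
def IsDesign (m : ℕ) (S : Finset (Fin m → ℝ)) (w : (Fin m → ℝ) → ℝ) : Prop :=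
  (∀ x, 0 ≤ w x) ∧ ∑ x ∈ S, w x = 1

/-- Variance function d(ξ,x) = xᵀ M(ξ)⁻¹ x. -/
noncomputable def dvar (m : ℕ) (S : Finset (Fin m → ℝ)) (w : (Fin m → ℝ) → ℝ)
    (x : Fin m → ℝ) : ℝ := x ⬝ᵥ (infoM m S w)⁻¹ *ᵥ x

/-- D-optimality: w maximizes det M over all designs on S. -/
def IsDOptimal (m : ℕ) (S : Finset (Fin m → ℝ)) (w : (Fin m → ℝ) → ℝ) : Prop :=
  IsDesign m S w ∧ ∀ v, IsDesign m S v → (infoM m S v).det ≤ (infoM m S w).det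

lemma psd_smul {m : ℕ} {A : Matrix (Fin m) (Fin m) ℝ} (hA : A.PosSemidef)
    {c : ℝ} (hc : 0 ≤ c) : (c • A).PosSemidef := by
  refine Matrix.posSemidef_iff_dotProduct_mulVec.mpr ⟨?_, ?_⟩
  · unfold Matrix.IsHermitian
    rw [conjTranspose_smul, hA.1]
    simp
  · intro y
    rw [smul_mulVec, dotProduct_smul, smul_eq_mul]
    exact mul_nonneg hc (hA.dotProduct_mulVec_nonneg y)

lemma psd_vecMulVec {m : ℕ} (x : Fin m → ℝ) : (vecMulVec x x).PosSemidef := by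
  refine Matrix.posSemidef_iff_dotProduct_mulVec.mpr ⟨?_, ?_⟩
  · ext i j
    simp [vecMulVec_apply, mul_comm, Matrix.conjTranspose_apply]
  · intro y
    have h : star y ⬝ᵥ (vecMulVec x x) *ᵥ y = (x ⬝ᵥ y) * (x ⬝ᵥ y) := by
      simp only [dotProduct, mulVec, vecMulVec_apply, Pi.star_apply, star_trivial,
        Finset.mul_sum, Finset.sum_mul]
      rw [Finset.sum_comm]
      congr 1; ext i; congr 1; ext j; ring
    rw [h]
    exact mul_self_nonneg _

lemma psd_infoM {m : ℕ} (S : Finset (Fin m → ℝ)) (w : (Fin m → ℝ) → ℝ)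
    (hw : ∀ x, 0 ≤ w x) : (infoM m S w).PosSemidef := by
  unfold infoM
  induction S using Finset.induction with
  | empty => simpa using Matrix.PosSemidef.zero
  | insert _ _ h ih =>
    rw [Finset.sum_insert h]
    exact Matrix.PosSemidef.add (psd_smul (psd_vecMulVec _) (hw _)) ih

lemma trace_eq_sum_eig {n : ℕ} {C : Matrix (Fin n) (Fin n) ℝ} (hC : C.IsHermitian) :
    C.trace = ∑ i, hC.eigenvalues i := by
  conv_lhs => rw [hC.spectral_theorem]
  rw [Unitary.conjStarAlgAut_apply, trace_mul_cycle]
  have h1 : (star (hC.eigenvectorUnitary : Matrix (Fin n) (Fin n) ℝ)) *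
      (hC.eigenvectorUnitary : Matrix (Fin n) (Fin n) ℝ) = 1 := by
    exact_mod_cast Unitary.coe_star_mul_self hC.eigenvectorUnitary
  rw [h1, Matrix.one_mul, trace_diagonal]
  simp

lemma logdet_le_trace {n : ℕ} {C : Matrix (Fin n) (Fin n) ℝ} (hC : C.PosDef) :
    Real.log C.det ≤ C.trace - n := by
  have hdet : C.det = ∏ i, hC.1.eigenvalues i := by
    rw [hC.isHermitian.det_eq_prod_eigenvalues]; norm_num
  rw [hdet, Real.log_prod (fun i _ => (hC.eigenvalues_pos i).ne'),
    trace_eq_sum_eig hC.1]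
  have : ∑ i, Real.log (hC.1.eigenvalues i) ≤ ∑ i : Fin n, (hC.1.eigenvalues i - 1) :=
    Finset.sum_le_sum fun i _ => Real.log_le_sub_one_of_pos (hC.eigenvalues_pos i)
  simpa [Finset.sum_sub_distrib] using this

lemma pd_of_psd_det {n : ℕ} {A : Matrix (Fin n) (Fin n) ℝ} (hA : A.PosSemidef)
    (hd : A.det ≠ 0) : A.PosDef := by
  refine Matrix.posDef_iff_dotProduct_mulVec.mpr ⟨hA.1, fun x hx => (hA.dotProduct_mulVec_nonneg x).lt_of_ne' fun h => hx ?_⟩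
  have h0 : A *ᵥ x = 0 := (hA.dotProduct_mulVec_zero_iff x).mp h
  have : A⁻¹ *ᵥ (A *ᵥ x) = x := by
    rw [mulVec_mulVec, Matrix.nonsing_inv_mul A (isUnit_iff_ne_zero.mpr hd), one_mulVec]
  rw [← this, h0, mulVec_zero]

lemma trace_mul_vecMulVec {n : ℕ} (M : Matrix (Fin n) (Fin n) ℝ) (x : Fin n → ℝ) :
    (M * vecMulVec x x).trace = x ⬝ᵥ M *ᵥ x := by
  simp only [Matrix.trace, Matrix.diag, Matrix.mul_apply, vecMulVec_apply, dotProduct,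
    mulVec, Finset.mul_sum]
  congr 1; ext i; congr 1; ext j; ring

/-- If max_x d(ξ,x) − m = ε < δ then log det M(ξ*) − log det M(ξ) < δ for a
D-optimum ξ*. -/
theorem logdet_gap_lt
    (m : ℕ) (S : Finset (Fin m → ℝ)) (hS : S.Nonempty)
    (w wstar : (Fin m → ℝ) → ℝ)
    (hw : IsDesign m S w) (hopt : IsDOptimal m S wstar)
    (hM : IsUnit (infoM m S w).det) (hMstar : IsUnit (infoM m S wstar).det)
    (ε δ : ℝ)
    (hε : ε = S.sup' hS (fun x => dvar m S w x) - m) (hεδ : ε < δ) :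
    Real.log (infoM m S wstar).det - Real.log (infoM m S w).det < δ := by
  set A := infoM m S w with hA
  set B := infoM m S wstar with hB
  have hAd : A.det ≠ 0 := hM.ne_zero
  have hBd : B.det ≠ 0 := hMstar.ne_zero
  have hApsd : A.PosSemidef := psd_infoM S w hw.1
  have hBpsd : B.PosSemidef := psd_infoM S wstar hopt.1.1
  have hApd : A.PosDef := pd_of_psd_det hApsd hAd
  have hBpd : B.PosDef := pd_of_psd_det hBpsd hBd
  set R := (open scoped MatrixOrder in CFC.sqrt A) with hRdef
  have hRpsd : R.PosSemidef := by
    open scoped MatrixOrder in exact Matrix.nonneg_iff_posSemidef.mp (CFC.sqrt_nonneg A)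
  have hRR : R * R = A := by
    open scoped MatrixOrder in exact CFC.sqrt_mul_sqrt_self A (Matrix.nonneg_iff_posSemidef.mpr hApsd)
  have hRdet : R.det * R.det = A.det := by rw [← det_mul, hRR]
  have hRd : R.det ≠ 0 := by
    intro h; apply hAd; rw [← hRdet, h, mul_zero]
  -- C = R⁻¹ B R⁻¹
  set C := R⁻¹ * B * R⁻¹ with hCdef
  have hRinvH : (R⁻¹)ᴴ = R⁻¹ := by
    rw [Matrix.conjTranspose_nonsing_inv, hRpsd.1]
  have hCpsd : C.PosSemidef := by
    have := hBpsd.conjTranspose_mul_mul_same R⁻¹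
    rwa [hRinvH] at this
  have hCdet : C.det = B.det * (A.det)⁻¹ := by
    rw [hCdef, det_mul, det_mul, Matrix.det_nonsing_inv, Ring.inverse_eq_inv', ← hRdet]
    field_simp
  have hCd : C.det ≠ 0 := by
    rw [hCdet]
    exact mul_ne_zero hBd (inv_ne_zero hAd)
  have hCpd : C.PosDef := pd_of_psd_det hCpsd hCd
  -- trace C = trace (A⁻¹ * B)
  have hRinv2 : R⁻¹ * R⁻¹ = A⁻¹ := by rw [← Matrix.mul_inv_rev, hRR]
  have htr : C.trace = (A⁻¹ * B).trace := by
    rw [hCdef, trace_mul_cycle, hRinv2]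
  -- trace (A⁻¹ * B) = ∑ wstar x * dvar x
  have htr2 : (A⁻¹ * B).trace = ∑ x ∈ S, wstar x * dvar m S w x := by
    rw [hB]
    unfold infoM
    rw [Matrix.mul_sum, trace_sum]
    refine Finset.sum_congr rfl fun x hx => ?_
    rw [Matrix.mul_smul, trace_smul, smul_eq_mul, trace_mul_vecMulVec]
    rfl
  -- sum bound
  set c := S.sup' hS (fun x => dvar m S w x) with hc
  have hsum : ∑ x ∈ S, wstar x * dvar m S w x ≤ c := by
    calc ∑ x ∈ S, wstar x * dvar m S w x
        ≤ ∑ x ∈ S, wstar x * c :=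
          Finset.sum_le_sum fun x hx =>
            mul_le_mul_of_nonneg_left (Finset.le_sup' _ hx) (hopt.1.1 x)
      _ = c := by rw [← Finset.sum_mul, hopt.1.2, one_mul]
  -- log det C = log det B - log det A
  have hlogC : Real.log C.det = Real.log B.det - Real.log A.det := by
    rw [hCdet, Real.log_mul hBd (inv_ne_zero hAd), Real.log_inv]
    ring
  have key : Real.log B.det - Real.log A.det ≤ ε := by
    rw [← hlogC, hε]
    have h1 := logdet_le_trace hCpd
    have h2 : C.trace - m ≤ c - m := by
      rw [htr, htr2]; linarith
    calc Real.log C.det ≤ C.trace - m := by simpa using h1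
      _ ≤ c - m := h2
  linarith
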